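/- arXiv:hep-th/9502068 — 2 statements merged into one kernel-verified Lean document; each statement's English description precedes it below -/
import Mathlib

section
/- In the fixed-point subalgebra Ã_N, the commutator [G_i^{(m)}, A_{kl}^{(n)}] equals (δ_{ik} - δ_{k,i+1} - δ_{li} + δ_{l,i+1})(A_{kl}^{(m+n)} - (-1)^{mN} A_{kl}^{(n-m)}) for 1 ≤ k < l ≤ N, 1 ≤ i ≤ N-1, m ≥ 1, n ∈ Z. -/
noncomputable section
open Matrix LaurentPolynomial

attribute [local instance] LieRing.ofAssociativeRing

/-- The (gl) loop algebra: matrices over Laurent polynomials. -/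
abbrev gl (N : ℕ) := Matrix (Fin N) (Fin N) (LaurentPolynomial ℂ)

/-- The traceless part: the `sl(N)` loop algebra, as a Lie subalgebra over ℂ. -/
def slC (N : ℕ) : LieSubalgebra ℂ (gl N) where
  carrier := {A | Matrix.trace A = 0}
  add_mem' := by
    intro a b ha hb
    simp only [Set.mem_setOf_eq] at *
    rw [Matrix.trace_add, ha, hb, add_zero]
  zero_mem' := by simp
  smul_mem' := by
    intro c A hA
    simp only [Set.mem_setOf_eq] at *
    rw [Matrix.trace_smul, hA, smul_zero]
  lie_mem' := by
    intro x y hx hy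
    simp only [Set.mem_setOf_eq] at *
    rw [Ring.lie_def, Matrix.trace_sub, Matrix.trace_mul_comm, sub_self]

/-- Basis element `tⁿ E_{ij}` (for `i ≠ j`) of the `sl(N)` loop algebra. -/
def TE (N : ℕ) (n : ℤ) (i j : Fin N) (h : i ≠ j) : slC N :=
  ⟨(T n : LaurentPolynomial ℂ) • single i j (1 : LaurentPolynomial ℂ), by
    show Matrix.trace _ = 0
    rw [Matrix.trace_smul, Matrix.trace_single_eq_of_ne i j _ h, smul_zero]⟩

/-- Basis element `tⁿ H_k = tⁿ (E_{kk} - E_{k+1,k+1})` of the `sl(N)` loop algebra. -/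
def TH (N : ℕ) (n : ℤ) (k : Fin N) (hk : (k : ℕ) + 1 < N) : slC N :=
  ⟨(T n : LaurentPolynomial ℂ) • (single k k (1 : LaurentPolynomial ℂ)
      - single (⟨(k : ℕ) + 1, hk⟩ : Fin N) (⟨(k : ℕ) + 1, hk⟩ : Fin N) 1), by
    show Matrix.trace _ = 0
    rw [Matrix.trace_smul, Matrix.trace_sub, Matrix.trace_single_eq_same,
      Matrix.trace_single_eq_same, sub_self, smul_zero]⟩


/-- The fixed vector `A_{ij}^{(n)} = tⁿE_{ij} + (-1)^{i+j+1+nN} t^{-n}E_{ji}`. -/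
def Abasis (N : ℕ) (n : ℤ) (i j : Fin N) (h : i ≠ j) : ↥(slC N) :=
  TE N n i j h
    + (((-1 : ℂ) ^ ((i : ℕ) + (j : ℕ) + 1)) * ((-1 : ℂ) ^ (n * (N : ℤ)))) • TE N (-n) j i h.symm

/-- The fixed vector `G_k^{(n)} = tⁿH_k + (-1)^{nN+1} t^{-n}H_k`. -/
def Gbasis (N : ℕ) (n : ℤ) (k : Fin N) (hk : (k : ℕ) + 1 < N) : ↥(slC N) :=
  TH N n k hk - ((-1 : ℂ) ^ (n * (N : ℤ))) • TH N (-n) k hk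

/-- Auxiliary: commutator of `H_i` with `E_{ab}` at the matrix level. -/
lemma HmulE (N : ℕ) (i i' a b : Fin N) (hab : a ≠ b) (hii' : i ≠ i') :
    (single i i (1:LaurentPolynomial ℂ) - single i' i' 1) * single a b 1
      - single a b 1 * (single i i (1:LaurentPolynomial ℂ) - single i' i' 1)
    = (((if a = i then (1:ℂ) else 0) - (if a = i' then 1 else 0))
        - ((if b = i then 1 else 0) - (if b = i' then 1 else 0))) • single a b 1 := by
  rw [sub_mul, mul_sub]
  by_cases h1 : a = i <;> by_cases h2 : a = i' <;> by_cases h3 : b = i <;> by_cases h4 : b = i' <;>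
    simp_all [single_mul_single_same, single_mul_single_of_ne, smul_single,
      Ne.symm, sub_smul, smul_sub, add_smul, single_add, one_smul]

/-- Auxiliary: `⁅tᵐH_i, tⁿE_{ab}⁆`. -/
lemma TH_bracket_TE (N : ℕ) (m n : ℤ) (i : Fin N) (hi : (i:ℕ)+1 < N)
    (a b : Fin N) (hab : a ≠ b) :
    ⁅TH N m i hi, TE N n a b hab⁆
      = (((if a = i then (1:ℂ) else 0) - (if (a:ℕ) = (i:ℕ)+1 then 1 else 0))
          - ((if b = i then 1 else 0) - (if (b:ℕ) = (i:ℕ)+1 then 1 else 0)))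
          • TE N (m+n) a b hab := by
  apply Subtype.ext
  rw [LieSubalgebra.coe_bracket]
  show _ * _ - _ * _ = _
  show ((T m : LaurentPolynomial ℂ) • (single i i (1 : LaurentPolynomial ℂ)
        - single (⟨(i:ℕ)+1, hi⟩ : Fin N) (⟨(i:ℕ)+1, hi⟩ : Fin N) 1))
      * ((T n : LaurentPolynomial ℂ) • single a b 1)
    - ((T n : LaurentPolynomial ℂ) • single a b 1)
      * ((T m : LaurentPolynomial ℂ) • (single i i (1 : LaurentPolynomial ℂ)
        - single (⟨(i:ℕ)+1, hi⟩ : Fin N) (⟨(i:ℕ)+1, hi⟩ : Fin N) 1))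
    = _ • ((T (m+n) : LaurentPolynomial ℂ) • single a b 1)
  set i' : Fin N := ⟨(i:ℕ)+1, hi⟩ with hi'
  have hii' : i ≠ i' := by
    intro h; apply absurd (congrArg Fin.val h); simp [hi']
  have ha' : ((a:ℕ) = (i:ℕ)+1) = (a = i') := by
    simp [hi', Fin.ext_iff]
  have hb' : ((b:ℕ) = (i:ℕ)+1) = (b = i') := by
    simp [hi', Fin.ext_iff]
  rw [smul_mul_smul_comm, smul_mul_smul_comm, ← T_add, ← T_add, add_comm n m, ← smul_sub,
    HmulE N i i' a b hab hii', smul_comm]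
  simp only [ha', hb']

/-- In the fixed-point subalgebra `Ã_N`,
`[G_i^{(m)}, A_{kl}^{(n)}] = (δ_{ik} - δ_{k,i+1} - δ_{li} + δ_{l,i+1})
(A_{kl}^{(m+n)} - (-1)^{mN} A_{kl}^{(n-m)})` for `1 ≤ k < l ≤ N`, `1 ≤ i ≤ N-1`, `m ≥ 1`, `n ∈ ℤ`. -/
theorem G_bracket_A (N : ℕ) (hN : 2 ≤ N)
    (m : ℤ) (hm : 1 ≤ m) (n : ℤ)
    (i : Fin N) (hi : (i : ℕ) + 1 < N)
    (k l : Fin N) (hkl : k < l) :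
    ⁅Gbasis N m i hi, Abasis N n k l (ne_of_lt hkl)⁆
      = (((if k = i then (1 : ℂ) else 0) - (if (k : ℕ) = (i : ℕ) + 1 then 1 else 0)
          - (if l = i then 1 else 0) + (if (l : ℕ) = (i : ℕ) + 1 then 1 else 0)))
          • (Abasis N (m + n) k l (ne_of_lt hkl)
              - ((-1 : ℂ) ^ (m * (N : ℤ))) • Abasis N (n - m) k l (ne_of_lt hkl)) := by
  have hne : (-1 : ℂ) ≠ 0 := by norm_num
  have h1 : ((-1:ℂ)) ^ ((m + n) * (N:ℤ)) = (-1:ℂ) ^ (m * (N:ℤ)) * (-1:ℂ) ^ (n * (N:ℤ)) := by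
    rw [add_mul, zpow_add₀ hne]
  have hQ : ((-1:ℂ)) ^ (m * (N:ℤ)) * (-1:ℂ) ^ (m * (N:ℤ)) = 1 := by
    rw [← zpow_add₀ hne]
    exact Even.neg_one_zpow ⟨m * (N:ℤ), rfl⟩
  have h2 : ((-1:ℂ)) ^ ((n - m) * (N:ℤ)) = (-1:ℂ) ^ (n * (N:ℤ)) * (-1:ℂ) ^ (m * (N:ℤ)) := by
    have : (n - m) * (N:ℤ) = n * (N:ℤ) + m * (N:ℤ) + (-(m * (N:ℤ)) + -(m * (N:ℤ))) := by ring
    rw [this, zpow_add₀ hne, zpow_add₀ hne, ← zpow_add₀ hne,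
      Even.neg_one_zpow ⟨-(m * (N:ℤ)), rfl⟩, mul_one]
  simp only [Gbasis, Abasis, sub_lie, lie_add, smul_lie, lie_smul, TH_bracket_TE,
    h1, h2]
  rw [show m + -n = -(n - m) by ring, show -m + n = n - m by ring,
    show -m + -n = -(m + n) by ring]
  match_scalars <;>
  first
  | ring1
  | linear_combination (((((if k = i then (1:ℂ) else 0) - if (k:ℕ) = (i:ℕ) + 1 then 1 else 0)
      - if l = i then 1 else 0) + if (l:ℕ) = (i:ℕ) + 1 then 1 else 0)
      * (-1:ℂ) ^ ((k:ℕ) + (l:ℕ) + 1) * (-1:ℂ) ^ (n * (N:ℤ))) * hQ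
end
end

section
/- The elements ẽ_i = E_{i,i+1} + E_{i+1,i} for 1 ≤ i ≤ N-1 and ẽ_N = tE_{N,1} + t⁻¹E_{1,N} of the sl(N) loop algebra satisfy the generalized Dolan–Grady relations: [ẽ_i,[ẽ_i,ẽ_j]] = ẽ_j whenever i,j are cyclically adjacent mod N, and [ẽ_i,ẽ_j] = 0 for non-adjacent i ≠ j. Hence there is a surjective Lie algebra homomorphism π: A_N → Ã_N with π(e_i) = ẽ_i. -/
noncomputable section
open Matrix LaurentPolynomial
attribute [local instance 100] LieRing.ofAssociativeRing

noncomputable section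

/-- The generalized Dolan–Grady relations for a cyclic family `e` of `N` elements. -/
def DolanGrady {N : ℕ} [NeZero N] {L : Type*} [LieRing L] (e : Fin N → L) : Prop :=
  (∀ i j : Fin N, (j = i + 1 ∨ i = j + 1) → ⁅e i, ⁅e i, e j⁆⁆ = e j) ∧
  (∀ i j : Fin N, i ≠ j → j ≠ i + 1 → i ≠ j + 1 → ⁅e i, e j⁆ = 0)

/-- The right-nested string `S_k(r) = [e_k,[e_{k+1},...,e_{k+r-1}]...]`, with `S _ 0 = 0`. -/
def S {N : ℕ} [NeZero N] {L : Type*} [LieRing L] (e : Fin N → L) : ℕ → Fin N → L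
  | 0, _ => 0
  | 1, k => e k
  | (r + 2), k => ⁅e k, S e (r + 1) (k + 1)⁆

/-- The set of defining relators of the `sl(N)` Onsager algebra inside the free Lie algebra. -/
def OnsRels (N : ℕ) [NeZero N] : Set (FreeLieAlgebra ℂ (Fin N)) :=
  {x | ∃ i j : Fin N, (j = i + 1 ∨ i = j + 1) ∧
      x = ⁅FreeLieAlgebra.of ℂ i, ⁅FreeLieAlgebra.of ℂ i, FreeLieAlgebra.of ℂ j⁆⁆
            - FreeLieAlgebra.of ℂ j} ∪
  {x | ∃ i j : Fin N, i ≠ j ∧ j ≠ i + 1 ∧ i ≠ j + 1 ∧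
      x = ⁅FreeLieAlgebra.of ℂ i, FreeLieAlgebra.of ℂ j⁆}

/-- The Lie ideal generated by the Onsager relators. -/
def OnsIdeal (N : ℕ) [NeZero N] : LieIdeal ℂ (FreeLieAlgebra ℂ (Fin N)) :=
  LieSubmodule.lieSpan ℂ _ (OnsRels N)

/-- The `sl(N)` Onsager algebra, presented by generators and relations. -/
abbrev OnsAlg (N : ℕ) [NeZero N] := FreeLieAlgebra ℂ (Fin N) ⧸ OnsIdeal N

/-- The generators `e_i` of the `sl(N)` Onsager algebra. -/
def eGen (N : ℕ) [NeZero N] (i : Fin N) : OnsAlg N :=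
  LieSubmodule.Quotient.mk (N := OnsIdeal N) (FreeLieAlgebra.of ℂ i)


/-- The elements `ẽ_i` of the loop algebra: `ẽ_i = E_{i,i+1} + E_{i+1,i}` for `1 ≤ i ≤ N-1`,
and `ẽ_N = t E_{N,1} + t⁻¹ E_{1,N}` (0-based indices, cyclic successor `i + 1` in `Fin N`). -/
def etil (N : ℕ) [NeZero N] (i : Fin N) : gl N :=
  (T (if (i : ℕ) + 1 = N then 1 else 0) : LaurentPolynomial ℂ) • single i (i + 1) 1 +
  (T (if (i : ℕ) + 1 = N then -1 else 0) : LaurentPolynomial ℂ) • single (i + 1) i 1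


section DGAux
variable {N : ℕ} [NeZero N]

/-- Shorthand for a standard basis matrix with entry `1`. -/
abbrev EE (i j : Fin N) : gl N := single i j (1 : LaurentPolynomial ℂ)

omit [NeZero N] in
lemma mul_EE (i j k l : Fin N) :
    EE i j * EE k l = if j = k then EE i l else 0 := by
  split_ifs with h
  · subst h; rw [Matrix.single_mul_single_same, one_mul]
  · exact Matrix.single_mul_single_of_ne (h := h) ..

omit [NeZero N] in
lemma lie_EE (a b : LaurentPolynomial ℂ) (i j k l : Fin N) :
    ⁅a • EE i j, b • EE k l⁆ =
      (a * b) • ((if j = k then EE i l else 0) - (if l = i then EE k j else 0)) := by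
  rw [Ring.lie_def, smul_mul_assoc, smul_mul_assoc, mul_smul_comm, mul_smul_comm,
    smul_smul, smul_smul, mul_comm b a, mul_EE, mul_EE, smul_sub]

omit [NeZero N] in
lemma lie_EE' (a : LaurentPolynomial ℂ) (i j k l : Fin N) :
    ⁅a • EE i j, EE k l⁆ =
      a • ((if j = k then EE i l else 0) - (if l = i then EE k j else 0)) := by
  have := lie_EE a 1 i j k l
  rwa [one_smul, mul_one] at this

omit [NeZero N] in
lemma lie_EE'' (b : LaurentPolynomial ℂ) (i j k l : Fin N) :
    ⁅EE i j, b • EE k l⁆ =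
      b • ((if j = k then EE i l else 0) - (if l = i then EE k j else 0)) := by
  have := lie_EE 1 b i j k l
  rwa [one_smul, one_mul] at this

lemma fin_one_ne (hN : 3 ≤ N) (i : Fin N) : i ≠ i + 1 := by
  intro h
  rw [left_eq_add] at h
  apply_fun Fin.val at h
  rw [Fin.val_one', Fin.val_zero, Nat.mod_eq_of_lt (by omega : 1 < N)] at h
  omega

lemma fin_two_ne (hN : 3 ≤ N) (i : Fin N) : i ≠ i + 1 + 1 := by
  intro h
  rw [add_assoc, left_eq_add] at h
  apply_fun Fin.val at h
  rw [Fin.val_add, Fin.val_one', Fin.val_zero, Nat.mod_eq_of_lt (by omega : 1 < N),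
    Nat.mod_eq_of_lt (by omega : 1 + 1 < N)] at h
  omega

set_option maxHeartbeats 1000000 in
lemma DG_adj1 (hN : 3 ≤ N) (i : Fin N) (a b c d : LaurentPolynomial ℂ)
    (hab : a * b = 1) :
    ⁅a • EE i (i+1) + b • EE (i+1) i, ⁅a • EE i (i+1) + b • EE (i+1) i,
      c • EE (i+1) (i+1+1) + d • EE (i+1+1) (i+1)⁆⁆
      = c • EE (i+1) (i+1+1) + d • EE (i+1+1) (i+1) := by
  have h01 := fin_one_ne hN i
  have h12 := fin_one_ne hN (i + 1)
  have h02 := fin_two_ne hN i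
  simp only [lie_add, add_lie, lie_smul, lie_sub, sub_lie, lie_EE, lie_EE', lie_EE'',
    if_pos rfl, if_neg h01, if_neg h01.symm, if_neg h12, if_neg h12.symm,
    if_neg h02, if_neg h02.symm,
    smul_zero, zero_sub, sub_zero, smul_neg, lie_zero, zero_lie, smul_smul,
    if_true, lie_neg, neg_neg, neg_zero, zero_add, add_zero, neg_sub]
  match_scalars
  · linear_combination c * hab
  · linear_combination d * hab

set_option maxHeartbeats 1000000 in
lemma DG_adj2 (hN : 3 ≤ N) (j : Fin N) (a b c d : LaurentPolynomial ℂ)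
    (hab : a * b = 1) :
    ⁅a • EE (j+1) (j+1+1) + b • EE (j+1+1) (j+1), ⁅a • EE (j+1) (j+1+1) + b • EE (j+1+1) (j+1),
      c • EE j (j+1) + d • EE (j+1) j⁆⁆
      = c • EE j (j+1) + d • EE (j+1) j := by
  have h01 := fin_one_ne hN j
  have h12 := fin_one_ne hN (j + 1)
  have h02 := fin_two_ne hN j
  simp only [lie_add, add_lie, lie_smul, lie_sub, sub_lie, lie_EE, lie_EE', lie_EE'',
    if_pos rfl, if_neg h01, if_neg h01.symm, if_neg h12, if_neg h12.symm,
    if_neg h02, if_neg h02.symm,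
    smul_zero, zero_sub, sub_zero, smul_neg, lie_zero, zero_lie, smul_smul,
    if_true, lie_neg, neg_neg, neg_zero, zero_add, add_zero, neg_sub]
  match_scalars
  · linear_combination c * hab
  · linear_combination d * hab

lemma DG_non (i j : Fin N) (hij : i ≠ j) (h1 : j ≠ i + 1) (h2 : i ≠ j + 1)
    (a b c d : LaurentPolynomial ℂ) :
    ⁅a • EE i (i+1) + b • EE (i+1) i, c • EE j (j+1) + d • EE (j+1) j⁆ = 0 := by
  have h3 : i + 1 ≠ j + 1 := fun h => hij (add_right_cancel h)
  simp only [lie_add, add_lie, lie_EE,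
    if_neg hij, if_neg hij.symm, if_neg h1, if_neg h1.symm, if_neg h2, if_neg h2.symm,
    if_neg h3, if_neg h3.symm, sub_zero, smul_zero, sub_self, add_zero, zero_add]

lemma etil_exists (i : Fin N) : ∃ n : ℤ,
    etil N i = (T n : LaurentPolynomial ℂ) • EE i (i+1) + (T (-n) : LaurentPolynomial ℂ) • EE (i+1) i := by
  refine ⟨if (i : ℕ) + 1 = N then 1 else 0, ?_⟩
  unfold etil
  split_ifs with h <;> norm_num

lemma T_mul_T_neg (n : ℤ) : (T n : LaurentPolynomial ℂ) * T (-n) = 1 := by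
  rw [← T_add, add_neg_cancel, T_zero]

lemma etil_dolan_grady (hN : 3 ≤ N) : DolanGrady (etil N) := by
  constructor
  · intro i j hij
    obtain ⟨n, hn⟩ := etil_exists (N := N) i
    obtain ⟨m, hm⟩ := etil_exists (N := N) j
    rcases hij with h | h
    · subst h
      rw [hn, hm]
      exact DG_adj1 hN i _ _ _ _ (T_mul_T_neg n)
    · subst h
      rw [hn, hm]
      exact DG_adj2 hN j _ _ _ _ (T_mul_T_neg n)
  · intro i j hij h1 h2
    obtain ⟨n, hn⟩ := etil_exists (N := N) i
    obtain ⟨m, hm⟩ := etil_exists (N := N) j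
    rw [hn, hm]
    exact DG_non i j hij h1 h2 _ _ _ _

end DGAux

/-- The elements `ẽ_i` of the `sl(N)` loop algebra satisfy the generalized
Dolan–Grady relations; hence there is a Lie algebra homomorphism `π : A_N → L(sl(N))` with
`π(e_i) = ẽ_i`, surjective onto the Lie subalgebra `Ã_N` generated by the `ẽ_i`. -/
theorem etil_satisfies_dolan_grady (N : ℕ) (hN : 3 ≤ N) [NeZero N] :
    DolanGrady (etil N) ∧
    ∃ π : OnsAlg N →ₗ⁅ℂ⁆ gl N,
      (∀ i : Fin N, π (eGen N i) = etil N i) ∧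
      π.range = LieSubalgebra.lieSpan ℂ (gl N) (Set.range (etil N)) := by
  have hDG : DolanGrady (etil N) := etil_dolan_grady hN
  refine ⟨hDG, ?_⟩
  set f := FreeLieAlgebra.lift ℂ (etil N) with hf
  have hker : ∀ x ∈ (OnsIdeal N).toSubmodule, f.toLinearMap x = 0 := by
    have h : OnsIdeal N ≤ f.ker := by
      rw [OnsIdeal, LieSubmodule.lieSpan_le]
      rintro x (⟨i, j, hadj, rfl⟩ | ⟨i, j, h1, h2, h3, rfl⟩)
      · show _ ∈ f.ker
        rw [LieHom.mem_ker, map_sub, LieHom.map_lie, LieHom.map_lie]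
        simp only [hf, FreeLieAlgebra.lift_of_apply]
        rw [hDG.1 i j hadj, sub_self]
      · show _ ∈ f.ker
        rw [LieHom.mem_ker, LieHom.map_lie]
        simp only [hf, FreeLieAlgebra.lift_of_apply]
        exact hDG.2 i j h1 h2 h3
    intro x hx
    exact LieHom.mem_ker.mp (h hx)
  refine ⟨{ toLinearMap := Submodule.liftQ (OnsIdeal N).toSubmodule f.toLinearMap hker
            map_lie' := ?_ }, ?_, ?_⟩
  · intro x y
    obtain ⟨x, rfl⟩ := LieSubmodule.Quotient.surjective_mk' (OnsIdeal N) x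
    obtain ⟨y, rfl⟩ := LieSubmodule.Quotient.surjective_mk' (OnsIdeal N) y
    show Submodule.liftQ _ _ _ ⁅_, _⁆ = ⁅Submodule.liftQ _ _ _ _, Submodule.liftQ _ _ _ _⁆
    simp only [LieSubmodule.Quotient.mk'_apply]
    rw [← LieSubmodule.Quotient.mk_bracket]
    erw [Submodule.liftQ_apply, Submodule.liftQ_apply, Submodule.liftQ_apply]
    exact f.map_lie x y
  · intro i
    show Submodule.liftQ _ _ _ _ = _
    erw [Submodule.liftQ_apply]
    exact FreeLieAlgebra.lift_of_apply (etil N) i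
  · apply le_antisymm
    · rintro x hx
      obtain ⟨y, rfl⟩ := (LieHom.mem_range _ _).mp hx
      obtain ⟨y, rfl⟩ := LieSubmodule.Quotient.surjective_mk' (OnsIdeal N) y
      show Submodule.liftQ _ _ _ _ ∈ _
      erw [Submodule.liftQ_apply]
      set K := LieSubalgebra.lieSpan ℂ (gl N) (Set.range (etil N)) with hK
      let g : Fin N → K := fun i => ⟨etil N i, LieSubalgebra.subset_lieSpan ⟨i, rfl⟩⟩
      have hcomp : K.incl.comp (FreeLieAlgebra.lift ℂ g) = f := by
        apply FreeLieAlgebra.hom_ext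
        intro x
        simp only [LieHom.coe_comp, Function.comp_apply, FreeLieAlgebra.lift_of_apply, hf]
        rfl
      have : f.toLinearMap y = K.incl (FreeLieAlgebra.lift ℂ g y) := by
        rw [← hcomp]; rfl
      rw [this]
      exact (FreeLieAlgebra.lift ℂ g y).2
    · rw [LieSubalgebra.lieSpan_le]
      rintro x ⟨i, rfl⟩
      refine (LieHom.mem_range _ _).mpr ⟨eGen N i, ?_⟩
      show Submodule.liftQ _ _ _ _ = _
      erw [Submodule.liftQ_apply]
      exact FreeLieAlgebra.lift_of_apply (etil N) i
end
end
end
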